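/- Fix a superposition hash h : D → S and strings u,w ∈ Γ^D. If the class h^{-1}(j) contains no mismatch index of (u,w), then the j-th component of the superposition trace difference Δ_{α,h}(u,w)_j is the zero trace vector; and if h^{-1}(j) contains exactly one mismatch index i, then restore(Δ_{α,h}(u,w)_j) = (i, u_i, w_i) for every choice of α. -/

import Mathlib

open Finset

/-- The class of indices (in `D`) hashed by `h` to bucket `j`. -/
def hashClass {S : Type*} [DecidableEq S] (D : Finset ℕ) (h : ℕ → S) (j : S) : Finset ℕ :=
  D.filter (fun i => h i = j)

theorem superposition_trace_recovery {S : Type*} [DecidableEq S]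
    (p : ℕ) [hp : Fact p.Prime] (hp2 : p ≠ 2)
    (D : Finset ℕ) (h : ℕ → S) (α : ZMod p) (u w : ℕ → ZMod p) (j : S) :
    ((∀ i ∈ hashClass D h j, u i = w i) →
      (∑ i ∈ hashClass D h j, (u i - w i)) = 0 ∧
      (∑ i ∈ hashClass D h j, ((i : ZMod p) * u i - (i : ZMod p) * w i)) = 0 ∧
      (∑ i ∈ hashClass D h j, (u i ^ 2 - w i ^ 2)) = 0 ∧
      (∑ i ∈ hashClass D h j, (α ^ i * u i - α ^ i * w i)) = 0) ∧
    (∀ i₀ ∈ hashClass D h j, u i₀ ≠ w i₀ →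
      (∀ i ∈ hashClass D h j, u i ≠ w i → i = i₀) →
      (∑ i ∈ hashClass D h j, ((i : ZMod p) * u i - (i : ZMod p) * w i)) /
          (∑ i ∈ hashClass D h j, (u i - w i)) = (i₀ : ZMod p) ∧
      ((∑ i ∈ hashClass D h j, (u i ^ 2 - w i ^ 2)) +
          (∑ i ∈ hashClass D h j, (u i - w i)) ^ 2) /
          (2 * ∑ i ∈ hashClass D h j, (u i - w i)) = u i₀ ∧
      ((∑ i ∈ hashClass D h j, (u i ^ 2 - w i ^ 2)) -
          (∑ i ∈ hashClass D h j, (u i - w i)) ^ 2) /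
          (2 * ∑ i ∈ hashClass D h j, (u i - w i)) = w i₀) := by
  constructor
  · intro heq
    refine ⟨?_, ?_, ?_, ?_⟩ <;>
      refine Finset.sum_eq_zero fun i hi => ?_ <;> rw [heq i hi] <;> ring
  · intro i₀ hi₀ hne hu
    have h1 : (∑ i ∈ hashClass D h j, (u i - w i)) = u i₀ - w i₀ := by
      refine Finset.sum_eq_single_of_mem i₀ hi₀ fun i hi hii => ?_
      rcases eq_or_ne (u i) (w i) with he | he
      · rw [he]; ring
      · exact absurd (hu i hi he) hii
    have h2 : (∑ i ∈ hashClass D h j, ((i : ZMod p) * u i - (i : ZMod p) * w i))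
        = (i₀ : ZMod p) * u i₀ - (i₀ : ZMod p) * w i₀ := by
      refine Finset.sum_eq_single_of_mem i₀ hi₀ fun i hi hii => ?_
      rcases eq_or_ne (u i) (w i) with he | he
      · rw [he]; ring
      · exact absurd (hu i hi he) hii
    have h3 : (∑ i ∈ hashClass D h j, (u i ^ 2 - w i ^ 2)) = u i₀ ^ 2 - w i₀ ^ 2 := by
      refine Finset.sum_eq_single_of_mem i₀ hi₀ fun i hi hii => ?_
      rcases eq_or_ne (u i) (w i) with he | he
      · rw [he]; ring
      · exact absurd (hu i hi he) hii
    have hd : u i₀ - w i₀ ≠ 0 := sub_ne_zero.mpr hne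
    have h2ne : (2 : ZMod p) ≠ 0 := by
      exact (ZMod.natCast_eq_zero_iff 2 p).not.mpr
        (by simpa [Nat.prime_dvd_prime_iff_eq hp.out Nat.prime_two] using hp2)
    rw [h1, h2, h3]
    refine ⟨?_, ?_, ?_⟩
    · field_simp
    · field_simp
      ring
    · field_simp
      ring
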